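/- arXiv:1510.02061 — 3 statements merged into one kernel-verified Lean document; each statement's English description precedes it below -/
import Mathlib

section
/- Let B ⊆ A be a quasi-unital inclusion of C*-algebras, i.e., the set of products {b₁ a b₂ : b₁, b₂ ∈ B, a ∈ A} spans a norm-dense subspace of A. Then any approximate unit for B is an approximate unit for A. -/
/-!
STATEMENT 0: If `B ⊆ A` is a quasi-unital inclusion of C*-algebras (the closed linear
span of `B·A·B` is all of `A`), then any approximate unit for `B` is an approximate
unit for `A`.  The inclusion is modelled by an isometric star-algebra homomorphism
`ι : B → A`.
-/

open Filter Topology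

private lemma closed_left_aux {A : Type*} [NonUnitalNormedRing A] {I : Type*} (l : Filter I)
    (u : I → A) (hu : ∀ i, ‖u i‖ ≤ 1) :
    IsClosed {a : A | Tendsto (fun i => u i * a) l (𝓝 a)} := by
  rw [← isSeqClosed_iff_isClosed]
  intro x a hmem hxa
  rw [Set.mem_setOf_eq, Metric.tendsto_nhds]
  intro ε hε
  obtain ⟨n, hn⟩ := Metric.tendsto_atTop.mp hxa (ε / 3) (by positivity)
  have h1 : dist (x n) a < ε / 3 := hn n le_rfl
  filter_upwards [Metric.tendsto_nhds.mp (hmem n) (ε / 3) (by positivity)] with i hi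
  have h2 : dist (u i * a) (u i * x n) ≤ dist a (x n) := by
    rw [dist_eq_norm, dist_eq_norm, ← mul_sub]
    calc ‖u i * (a - x n)‖ ≤ ‖u i‖ * ‖a - x n‖ := norm_mul_le _ _
      _ ≤ 1 * ‖a - x n‖ := by
          have := norm_nonneg (a - x n)
          exact mul_le_mul_of_nonneg_right (hu i) this
      _ = ‖a - x n‖ := one_mul _
  have h3 : dist a (x n) = dist (x n) a := dist_comm _ _
  calc dist (u i * a) a
      ≤ dist (u i * a) (u i * x n) + dist (u i * x n) (x n) + dist (x n) a :=
        dist_triangle4 _ _ _ _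
    _ < ε / 3 + ε / 3 + ε / 3 := by linarith
    _ = ε := by ring

private lemma closed_right_aux {A : Type*} [NonUnitalNormedRing A] {I : Type*} (l : Filter I)
    (u : I → A) (hu : ∀ i, ‖u i‖ ≤ 1) :
    IsClosed {a : A | Tendsto (fun i => a * u i) l (𝓝 a)} := by
  rw [← isSeqClosed_iff_isClosed]
  intro x a hmem hxa
  rw [Set.mem_setOf_eq, Metric.tendsto_nhds]
  intro ε hε
  obtain ⟨n, hn⟩ := Metric.tendsto_atTop.mp hxa (ε / 3) (by positivity)
  have h1 : dist (x n) a < ε / 3 := hn n le_rfl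
  filter_upwards [Metric.tendsto_nhds.mp (hmem n) (ε / 3) (by positivity)] with i hi
  have h2 : dist (a * u i) (x n * u i) ≤ dist a (x n) := by
    rw [dist_eq_norm, dist_eq_norm, ← sub_mul]
    calc ‖(a - x n) * u i‖ ≤ ‖a - x n‖ * ‖u i‖ := norm_mul_le _ _
      _ ≤ ‖a - x n‖ * 1 :=
          mul_le_mul_of_nonneg_left (hu i) (norm_nonneg _)
      _ = ‖a - x n‖ := mul_one _
  have h3 : dist a (x n) = dist (x n) a := dist_comm _ _
  calc dist (a * u i) a
      ≤ dist (a * u i) (x n * u i) + dist (x n * u i) (x n) + dist (x n) a :=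
        dist_triangle4 _ _ _ _
    _ < ε / 3 + ε / 3 + ε / 3 := by linarith
    _ = ε := by ring

theorem quasiUnital_approximateUnit
    {A B : Type*} [NonUnitalCStarAlgebra A] [NonUnitalCStarAlgebra B]
    (ι : B →⋆ₙₐ[ℂ] A) (hι : Isometry ι)
    -- quasi-unitality: the closed span of B·A·B is all of A
    (hqu : closure (Submodule.span ℂ
      {x : A | ∃ (b₁ b₂ : B) (a : A), x = ι b₁ * a * ι b₂} : Set A) = Set.univ)
    -- an approximate unit for B: a net of positive elements of norm at most 1
    {I : Type*} (l : Filter I) [l.NeBot] (e : I → B)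
    (he_pos : ∀ i, ∃ c : B, e i = star c * c)
    (he_norm : ∀ i, ‖e i‖ ≤ 1)
    (he_left : ∀ b : B, Tendsto (fun i => e i * b) l (𝓝 b))
    (he_right : ∀ b : B, Tendsto (fun i => b * e i) l (𝓝 b)) :
    (∀ a : A, Tendsto (fun i => ι (e i) * a) l (𝓝 a)) ∧
      (∀ a : A, Tendsto (fun i => a * ι (e i)) l (𝓝 a)) := by
  have hnorm : ∀ i, ‖ι (e i)‖ ≤ 1 := fun i => by
    rw [hι.norm_map_of_map_zero (map_zero ι)]; exact he_norm i
  have hcont : Continuous ι := hι.continuous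
  constructor
  · -- left
    let S : Submodule ℂ A :=
      { carrier := {a : A | Tendsto (fun i => ι (e i) * a) l (𝓝 a)}
        add_mem' := fun {x y} hx hy => by
          simpa [mul_add] using hx.add hy
        zero_mem' := by simpa using (tendsto_const_nhds : Tendsto (fun _ : I => (0 : A)) l _)
        smul_mem' := fun c x hx => by
          simpa [mul_smul_comm] using hx.const_smul c }
    have hgen : {x : A | ∃ (b₁ b₂ : B) (a : A), x = ι b₁ * a * ι b₂} ⊆ S := by
      rintro x ⟨b₁, b₂, a, rfl⟩
      have h1 : Tendsto (fun i => ι (e i * b₁) * a * ι b₂) l (𝓝 (ι b₁ * a * ι b₂)) :=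
        (((hcont.tendsto b₁).comp (he_left b₁)).mul_const a).mul_const (ι b₂)
      refine h1.congr fun i => ?_
      simp [map_mul, mul_assoc]
    have hcl : closure (Submodule.span ℂ
        {x : A | ∃ (b₁ b₂ : B) (a : A), x = ι b₁ * a * ι b₂} : Set A) ⊆
        {a : A | Tendsto (fun i => ι (e i) * a) l (𝓝 a)} :=
      closure_minimal (Submodule.span_le.mpr hgen)
        (closed_left_aux l (fun i => ι (e i)) hnorm)
    intro a
    exact hcl (hqu ▸ Set.mem_univ a)
  · -- right
    let S : Submodule ℂ A :=
      { carrier := {a : A | Tendsto (fun i => a * ι (e i)) l (𝓝 a)}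
        add_mem' := fun {x y} hx hy => by
          simpa [add_mul] using hx.add hy
        zero_mem' := by simpa using (tendsto_const_nhds : Tendsto (fun _ : I => (0 : A)) l _)
        smul_mem' := fun c x hx => by
          simpa [smul_mul_assoc] using hx.const_smul c }
    have hgen : {x : A | ∃ (b₁ b₂ : B) (a : A), x = ι b₁ * a * ι b₂} ⊆ S := by
      rintro x ⟨b₁, b₂, a, rfl⟩
      have h1 : Tendsto (fun i => ι b₁ * a * ι (b₂ * e i)) l (𝓝 (ι b₁ * a * ι b₂)) :=
        ((hcont.tendsto b₂).comp (he_right b₂)).const_mul (ι b₁ * a)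
      refine h1.congr fun i => ?_
      simp [map_mul, mul_assoc]
    have hcl : closure (Submodule.span ℂ
        {x : A | ∃ (b₁ b₂ : B) (a : A), x = ι b₁ * a * ι b₂} : Set A) ⊆
        {a : A | Tendsto (fun i => a * ι (e i)) l (𝓝 a)} :=
      closure_minimal (Submodule.span_le.mpr hgen)
        (closed_right_aux l (fun i => ι (e i)) hnorm)
    intro a
    exact hcl (hqu ▸ Set.mem_univ a)
end

section
/- Let B ⊆ A be a quasi-unital inclusion of C*-algebras. Then A is unital if and only if B is unital, and in that case they have the same unit. -/
/-!
STATEMENT 1: For a quasi-unital inclusion `B ⊆ A` of C*-algebras, `A` is unital iff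
`B` is unital, and in that case the units coincide.  The inclusion is modelled by an
isometric star-algebra homomorphism `ι : B → A`.
-/

/-- Any non-unital C⋆-algebra admits a partial order (pulled back from the spectral order on its
unitization) making it a `StarOrderedRing`. -/
lemma exists_starOrderedRing (B : Type*) [NonUnitalCStarAlgebra B] :
    ∃ _ : PartialOrder B, StarOrderedRing B := by
  letI : PartialOrder (Unitization ℂ B) := CStarAlgebra.spectralOrder _
  haveI : StarOrderedRing (Unitization ℂ B) := CStarAlgebra.spectralOrderedRing _
  letI : PartialOrder B :=
    PartialOrder.lift ((↑) : B → Unitization ℂ B) Unitization.inr_injective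
  refine ⟨‹_›, StarOrderedRing.of_nonneg_iff' ?_ ?_⟩
  · intro x y h z
    show ((z + x : B) : Unitization ℂ B) ≤ ((z + y : B) : Unitization ℂ B)
    rw [Unitization.inr_add, Unitization.inr_add]
    exact add_le_add_right (show (x : Unitization ℂ B) ≤ (y : Unitization ℂ B) from h) _
  · intro x
    constructor
    · intro hx
      have hx' : ((0 : B) : Unitization ℂ B) ≤ (x : Unitization ℂ B) := hx
      rw [Unitization.inr_zero] at hx'
      have hxsa : IsSelfAdjoint x :=
        Unitization.isSelfAdjoint_inr (R := ℂ) |>.mp (.of_nonneg hx')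
      set s : B := cfcₙ (fun t : ℝ => Real.sqrt |t|) x with hs_def
      have hs : IsSelfAdjoint s := cfcₙ_predicate _ x
      refine ⟨s, ?_⟩
      apply Unitization.inr_injective (R := ℂ)
      have hinr : (s : Unitization ℂ B) =
          cfc (fun t : ℝ => Real.sqrt |t|) (x : Unitization ℂ B) :=
        Unitization.real_cfcₙ_eq_cfc_inr x _ (by simp)
      have h1 : cfc (fun t : ℝ => Real.sqrt |t| * Real.sqrt |t|) (x : Unitization ℂ B)
          = cfc (fun t : ℝ => t) (x : Unitization ℂ B) := by
        refine cfc_congr fun t ht => ?_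
        have h0 : (0:ℝ) ≤ t := spectrum_nonneg_of_nonneg hx' ht
        show Real.sqrt |t| * Real.sqrt |t| = t
        rw [Real.mul_self_sqrt (abs_nonneg t), abs_of_nonneg h0]
      have h2 : cfc (fun t : ℝ => t) (x : Unitization ℂ B) = (x : Unitization ℂ B) :=
        cfc_id' ℝ _
      rw [Unitization.inr_mul, hs.star_eq, hinr,
        ← cfc_mul (fun t : ℝ => Real.sqrt |t|) (fun t : ℝ => Real.sqrt |t|)
          ((x : Unitization ℂ B)), h1, h2]
    · rintro ⟨s, rfl⟩
      show ((0 : B) : Unitization ℂ B) ≤ ((star s * s : B) : Unitization ℂ B)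
      rw [Unitization.inr_zero, Unitization.inr_mul, Unitization.inr_star]
      exact star_mul_self_nonneg _

theorem quasiUnital_unital_iff
    {A B : Type*} [NonUnitalCStarAlgebra A] [NonUnitalCStarAlgebra B]
    (ι : B →⋆ₙₐ[ℂ] A) (hι : Isometry ι)
    (hqu : closure (Submodule.span ℂ
      {x : A | ∃ (b₁ b₂ : B) (a : A), x = ι b₁ * a * ι b₂} : Set A) = Set.univ) :
    ((∃ e : A, ∀ a : A, e * a = a ∧ a * e = a) ↔
      (∃ f : B, ∀ b : B, f * b = b ∧ b * f = b)) ∧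
    (∀ (e : A) (f : B), (∀ a : A, e * a = a ∧ a * e = a) →
      (∀ b : B, f * b = b ∧ b * f = b) → e = ι f) := by
  set S : Set A := {x : A | ∃ (b₁ b₂ : B) (a : A), x = ι b₁ * a * ι b₂} with hS
  -- direction: a unit in B gives a unit in A
  have dir₂ : ∀ f : B, (∀ b : B, f * b = b ∧ b * f = b) →
      ∀ a : A, ι f * a = a ∧ a * ι f = a := by
    intro f hf
    let p : Submodule ℂ A :=
      { carrier := {a : A | ι f * a = a ∧ a * ι f = a}
        add_mem' := fun {a b} ha hb => by
          constructor
          · rw [mul_add, ha.1, hb.1]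
          · rw [add_mul, ha.2, hb.2]
        zero_mem' := by simp
        smul_mem' := fun c a ha => by
          constructor
          · rw [mul_smul_comm, ha.1]
          · rw [smul_mul_assoc, ha.2] }
    have hclosed : IsClosed (p : Set A) := by
      have h1 : IsClosed {a : A | ι f * a = a} :=
        isClosed_eq (by fun_prop) continuous_id
      have h2 : IsClosed {a : A | a * ι f = a} :=
        isClosed_eq (by fun_prop) continuous_id
      exact h1.inter h2
    have hSp : S ⊆ (p : Set A) := by
      rintro _ ⟨b₁, b₂, a, rfl⟩
      constructor
      · rw [← mul_assoc, ← mul_assoc, ← map_mul, (hf b₁).1]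
      · rw [mul_assoc, ← map_mul, (hf b₂).2]
    have : closure (Submodule.span ℂ S : Set A) ⊆ (p : Set A) :=
      closure_minimal (Submodule.span_le.mpr hSp) hclosed
    rw [hqu] at this
    intro a
    exact this (Set.mem_univ a)
  -- direction: a unit in A gives a unit in B
  have dir₁ : ∀ e : A, (∀ a : A, e * a = a ∧ a * e = a) →
      ∃ f : B, ι f = e := by
    intro e he
    obtain ⟨_, _⟩ := exists_starOrderedRing B
    set l : Filter B := CStarAlgebra.approximateUnit B with hl_def
    have hl := CStarAlgebra.increasingApproximateUnit B
    have hιnorm : ∀ x : B, ‖ι x‖ = ‖x‖ :=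
      fun x => hι.norm_map_of_map_zero (map_zero ι) x
    -- the approximate unit acts as a left approximate unit on all of `A`
    have hspan : ∀ a ∈ Submodule.span ℂ S,
        Filter.Tendsto (fun x : B => ι x * a) l (nhds a) := by
      intro a ha
      induction ha using Submodule.span_induction with
      | mem a ha =>
        obtain ⟨b₁, b₂, a', rfl⟩ := ha
        have key : Filter.Tendsto (fun x : B => ι (x * b₁) * (a' * ι b₂)) l
            (nhds (ι b₁ * (a' * ι b₂))) :=
          (((hι.continuous.tendsto b₁).comp
            (hl.tendsto_mul_right b₁)).mul tendsto_const_nhds)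
        have : (fun x : B => ι x * (ι b₁ * a' * ι b₂))
            = fun x : B => ι (x * b₁) * (a' * ι b₂) := by
          funext x
          rw [map_mul]
          noncomm_ring
        rw [this, mul_assoc]
        exact key
      | zero => simpa using tendsto_const_nhds
      | add a b _ _ ha hb =>
        have := ha.add hb
        simpa [mul_add] using this
      | smul c a _ ha =>
        have := ha.const_smul c
        simpa [mul_smul_comm] using this
    have hall : Filter.Tendsto (fun x : B => ι x * e) l (nhds e) := by
      rw [Metric.tendsto_nhds]
      intro ε hε
      have he' : e ∈ closure (Submodule.span ℂ S : Set A) := by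
        rw [hqu]; exact Set.mem_univ e
      obtain ⟨s, hs, hse⟩ := Metric.mem_closure_iff.mp he' (ε / 3) (by positivity)
      have h1 := Metric.tendsto_nhds.mp (hspan s hs) (ε / 3) (by positivity)
      filter_upwards [h1, hl.eventually_norm] with x hx1 hx2
      have hdist : dist (ι x * e) e ≤
          dist (ι x * e) (ι x * s) + dist (ι x * s) s + dist s e :=
        dist_triangle4 _ _ _ _
      have hd1 : dist (ι x * e) (ι x * s) ≤ dist e s := by
        rw [dist_eq_norm, dist_eq_norm, ← mul_sub]
        calc ‖ι x * (e - s)‖ ≤ ‖ι x‖ * ‖e - s‖ := norm_mul_le _ _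
          _ ≤ 1 * ‖e - s‖ := by
              apply mul_le_mul_of_nonneg_right _ (norm_nonneg _)
              rw [hιnorm]; exact hx2
          _ = ‖e - s‖ := one_mul _
      have hd3 : dist s e < ε / 3 := by rw [dist_comm]; exact hse
      have hd1' : dist (ι x * e) (ι x * s) < ε / 3 := hd1.trans_lt hse
      have := hdist
      linarith
    haveI : l.NeBot := hl.neBot
    have herange : e ∈ closure (Set.range ι) := by
      have : Filter.Tendsto (fun x : B => ι x) l (nhds e) := by
        have : (fun x : B => ι x * e) = fun x : B => ι x := by
          funext x; exact (he (ι x)).2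
        rwa [this] at hall
      exact mem_closure_of_tendsto this (Filter.Eventually.of_forall fun x => Set.mem_range_self x)
    rw [(hι.isClosedEmbedding.isClosed_range).closure_eq] at herange
    exact herange
  refine ⟨⟨?_, ?_⟩, ?_⟩
  · rintro ⟨e, he⟩
    obtain ⟨f, rfl⟩ := dir₁ e he
    refine ⟨f, fun b => ?_⟩
    constructor
    · have := (he (ι (f * b))).1
      apply hι.injective
      rw [map_mul]
      exact (he (ι b)).1
    · apply hι.injective
      rw [map_mul]
      exact (he (ι b)).2
  · rintro ⟨f, hf⟩
    exact ⟨ι f, dir₂ f hf⟩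
  · intro e f he hf
    have h1 : e * ι f = ι f := (he (ι f)).1
    have h2 : e * ι f = e := (dir₂ f hf e).2
    rw [← h1, h2]
end

section
/- Let (A, E) be the reduced amalgamated free product of {(Aᵢ, E^{Aᵢ}_B)}_{i∈{1,2}} over B, and let E_{A₁} : A → A₁ be the canonical conditional expectation. Then for every m ≥ 1, every alternating sequence ι ∈ I_m (meaning ι(k) ≠ ι(k+1)) with ι(m) ≠ 1, and all xₖ ∈ ker E^{A_{ι(k)}}_B (1 ≤ k ≤ m), the element x = x₁x₂⋯x_m satisfies E_{A₁}(x*x) = E(x*x). -/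
/-!
STATEMENT 3: In a reduced amalgamated free product `(A, E)` of `(A₁, E₁)` and
`(A₂, E₂)` over `B`, with `E_{A₁} : A → A₁` the canonical conditional expectation,
every alternating word `x = x₁ ⋯ x_m` (m ≥ 1) of kernel elements whose last letter
does not come from `A₁` satisfies `E_{A₁}(x* x) = E(x* x)` (where `B ⊆ A₁`).

The free components are `A i` for `i : Fin 2`, with `A₁ = A 0`.
-/

structure IsCondExp {A B : Type*} [NonUnitalCStarAlgebra A] [NonUnitalCStarAlgebra B]
    (ι : B →⋆ₙₐ[ℂ] A) (E : A →ₗ[ℂ] B) : Prop where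
  projection : ∀ b : B, E (ι b) = b
  bimodule : ∀ (b₁ b₂ : B) (x : A), E (ι b₁ * x * ι b₂) = b₁ * E x * b₂
  contractive : ∀ x : A, ‖E x‖ ≤ ‖x‖
  positive : ∀ x : A, ∃ y : B, E (star x * x) = star y * y

/-- `wordProd x n = x 0 * x 1 * ⋯ * x n`. -/
def wordProd {R : Type*} [Mul R] (x : ℕ → R) : ℕ → R
  | 0 => x 0
  | (n + 1) => wordProd x n * x (n + 1)

/- auxiliary lemmas -/

lemma sa_decomp {A : Type*} [NonUnitalCStarAlgebra A] (a : A) (ha : IsSelfAdjoint a) :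
    ∃ s t : A, a = star s * s - star t * t := by
  refine ⟨cfcₙ (fun x : ℝ => Real.sqrt x⁺) a, cfcₙ (fun x : ℝ => Real.sqrt x⁻) a, ?_⟩
  have hs : IsSelfAdjoint (cfcₙ (fun x : ℝ => Real.sqrt x⁺) a) := cfcₙ_predicate _ a
  have ht : IsSelfAdjoint (cfcₙ (fun x : ℝ => Real.sqrt x⁻) a) := cfcₙ_predicate _ a
  rw [hs.star_eq, ht.star_eq, ← cfcₙ_mul _ _ a, ← cfcₙ_mul _ _ a, ← cfcₙ_sub _ _ a]
  conv_lhs => rw [← cfcₙ_id ℝ a ha]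
  apply cfcₙ_congr
  intro x _
  simp only [id_eq]
  rw [Real.mul_self_sqrt (posPart_nonneg x), Real.mul_self_sqrt (negPart_nonneg x)]
  exact (posPart_sub_negPart x).symm

lemma IsCondExp.map_star' {A B : Type*} [NonUnitalCStarAlgebra A] [NonUnitalCStarAlgebra B]
    {ι : B →⋆ₙₐ[ℂ] A} {E : A →ₗ[ℂ] B} (h : IsCondExp ι E) (x : A) :
    E (star x) = star (E x) := by
  have key : ∀ z : A, IsSelfAdjoint z → IsSelfAdjoint (E z) := by
    intro z hz
    obtain ⟨s, t, rfl⟩ := sa_decomp z hz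
    obtain ⟨y, hy⟩ := h.positive s
    obtain ⟨w, hw⟩ := h.positive t
    rw [map_sub, hy, hw]
    exact (IsSelfAdjoint.star_mul_self y).sub (IsSelfAdjoint.star_mul_self w)
  have h1 : IsSelfAdjoint (E (x + star x)) := by
    apply key
    simp only [IsSelfAdjoint, star_add, star_star, add_comm]
  have h2 : IsSelfAdjoint (E (Complex.I • (x - star x))) := by
    apply key
    simp only [IsSelfAdjoint, star_smul, star_sub, star_star, RCLike.star_def, Complex.conj_I,
      neg_smul, smul_sub, neg_sub]
    abel
  set p := E x with hp
  set q := E (star x) with hq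
  have e1 : star p + star q = p + q := by
    have := h1
    rwa [map_add, IsSelfAdjoint, star_add] at this
  have e2 : star p - star q = q - p := by
    have := h2
    rw [map_smul, IsSelfAdjoint, star_smul, RCLike.star_def, Complex.conj_I, map_sub,
      star_sub, neg_smul] at this
    have := congrArg (fun z => Complex.I • z) this
    simp only [smul_neg, smul_smul, Complex.I_mul_I, neg_smul, one_smul, neg_neg] at this
    rw [hp, hq]
    linear_combination (norm := module) this
  have e3 : star p + star p = q + q := by
    have := congrArg₂ (· + ·) e1 e2
    linear_combination (norm := abel) this
  have h3 : (2 : ℂ) • star p = (2 : ℂ) • q := by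
    rw [two_smul, two_smul]; exact e3
  have := smul_right_injective B (two_ne_zero (α := ℂ)) h3
  rw [hq]; exact this.symm

lemma wordProd_succ {R : Type*} [Mul R] (x : ℕ → R) (n : ℕ) :
    wordProd x (n + 1) = wordProd x n * x (n + 1) := rfl

lemma wordProd_congr {R : Type*} [Mul R] {x y : ℕ → R} :
    ∀ n, (∀ k ≤ n, x k = y k) → wordProd x n = wordProd y n := by
  intro n
  induction n with
  | zero => intro h; exact h 0 le_rfl
  | succ n ih =>
    intro h
    rw [wordProd_succ, wordProd_succ, ih (fun k hk => h k (hk.trans (Nat.le_succ n))),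
      h (n+1) le_rfl]

lemma wordProd_cons {R : Type*} [Semigroup R] (s : R) (y : ℕ → R) :
    ∀ n, wordProd (fun k => if k = 0 then s else y (k - 1)) (n + 1) = s * wordProd y n := by
  intro n
  induction n with
  | zero => simp [wordProd]
  | succ n ih =>
    rw [wordProd_succ, ih, wordProd_succ, mul_assoc]
    simp

lemma wordProd_conj {R : Type*} [Semigroup R] (s t : R) (y : ℕ → R) (n : ℕ) :
    wordProd (fun k => if k = 0 then s else if k = n + 2 then t else y (k - 1)) (n + 2)
      = s * wordProd y n * t := by
  rw [wordProd_succ]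
  simp only [Nat.succ_ne_zero, if_false, if_pos rfl]
  congr 1
  have h : wordProd (fun k => if k = 0 then s else if k = n + 2 then t else y (k - 1)) (n + 1)
      = wordProd (fun k => if k = 0 then s else y (k - 1)) (n + 1) := by
    apply wordProd_congr
    intro k hk
    have : k ≠ n + 2 := by omega
    simp [this]
  rw [h, wordProd_cons]

lemma span_kill {M N : Type*} [AddCommGroup M] [Module ℂ M] [AddCommGroup N] [Module ℂ N]
    (F : M →ₗ[ℂ] N) (S : Set M) (h : ∀ r ∈ S, F r = 0) :
    ∀ v ∈ Submodule.span ℂ S, F v = 0 := by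
  intro v hv
  have hle : Submodule.span ℂ S ≤ LinearMap.ker F :=
    Submodule.span_le.mpr (fun r hr => LinearMap.mem_ker.mpr (h r hr))
  exact LinearMap.mem_ker.mp (hle hv)

lemma span_conj {R : Type*} [NonUnitalCStarAlgebra R] (s t : R) (S₁ S₂ : Set R)
    (h : ∀ r ∈ S₁, s * r * t ∈ Submodule.span ℂ S₂) :
    ∀ v ∈ Submodule.span ℂ S₁, s * v * t ∈ Submodule.span ℂ S₂ := by
  intro v hv
  induction hv using Submodule.span_induction with
  | mem r hr => exact h r hr
  | zero => simp
  | add u w _ _ hu hw =>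
    have : s * (u + w) * t = s * u * t + s * w * t := by noncomm_ring
    rw [this]; exact Submodule.add_mem _ hu hw
  | smul c u _ hu =>
    have : s * (c • u) * t = c • (s * u * t) := by
      rw [mul_smul_comm, smul_mul_assoc]
    rw [this]; exact Submodule.smul_mem _ c hu

/-- Alternating kernel words starting and ending with index `j`. -/
def altSet {B : Type*} [NonUnitalCStarAlgebra B]
    {A : Fin 2 → Type*} [∀ i, NonUnitalCStarAlgebra (A i)]
    {R : Type*} [NonUnitalCStarAlgebra R]
    (Ei : ∀ i, A i →ₗ[ℂ] B) (g : ∀ i, A i →⋆ₙₐ[ℂ] R) (j : Fin 2) : Set R :=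
  {r | ∃ (p : ℕ) (ι' : ℕ → Fin 2) (y : ℕ → R),
    (∀ k, k + 1 ≤ p → ι' k ≠ ι' (k + 1)) ∧
    (∀ k ≤ p, ∃ a : A (ι' k), Ei (ι' k) a = 0 ∧ y k = g (ι' k) a) ∧
    ι' 0 = j ∧ ι' p = j ∧ r = wordProd y p}

section Main

variable {B : Type*} [NonUnitalCStarAlgebra B]
    {A : Fin 2 → Type*} [∀ i, NonUnitalCStarAlgebra (A i)]
    {R : Type*} [NonUnitalCStarAlgebra R]
    (ιB : ∀ i, B →⋆ₙₐ[ℂ] A i) (g : ∀ i, A i →⋆ₙₐ[ℂ] R)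
    (Ei : ∀ i, A i →ₗ[ℂ] B)

/-- Single-letter decomposition: any `g j c` is `g 0 (ιB 0 (Ei j c))` plus an
alternating word of length one. -/
lemma letter_decomp
    (hcompat : ∀ i j : Fin 2, (g i).comp (ιB i) = (g j).comp (ιB j))
    (hEi : ∀ i, IsCondExp (ιB i) (Ei i)) (j : Fin 2) (c : A j) :
    g j c - g 0 (ιB 0 (Ei j c)) ∈ altSet Ei g j := by
  refine ⟨0, fun _ => j, fun _ => g j c - g 0 (ιB 0 (Ei j c)), fun k hk => absurd hk (by omega), ?_, rfl, rfl, rfl⟩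
  intro k _
  refine ⟨c - ιB j (Ei j c), ?_, ?_⟩
  · rw [map_sub, (hEi j).projection, sub_self]
  · have hc : g j (ιB j (Ei j c)) = g 0 (ιB 0 (Ei j c)) := by
      have := DFunLike.congr_fun (hcompat j 0) (Ei j c)
      simpa using this
    rw [map_sub, hc]

lemma conj_mem
    (hEi : ∀ i, IsCondExp (ιB i) (Ei i))
    {i j : Fin 2} (hij : i ≠ j) (a : A j) (ha : Ei j a = 0)
    {r : R} (hr : r ∈ altSet Ei g i) :
    g j (star a) * r * g j a ∈ altSet Ei g j := by
  obtain ⟨p, ι', y, halt, hker, h0, hp, rfl⟩ := hr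
  set F : ℕ → Fin 2 := fun k => if k = 0 then j else if k = p + 2 then j else ι' (k - 1) with hF
  set G : ℕ → R := fun k =>
    if k = 0 then g j (star a) else if k = p + 2 then g j a else y (k - 1) with hG
  have F0 : F 0 = j := by simp [hF]
  have Flast : F (p + 2) = j := by simp [hF]
  have Fmid : ∀ m, 1 ≤ m → m ≤ p + 1 → F m = ι' (m - 1) := by
    intro m h1 h2
    simp only [hF]
    rw [if_neg (by omega), if_neg (by omega)]
  have G0 : G 0 = g j (star a) := by simp [hG]
  have Glast : G (p + 2) = g j a := by simp [hG]
  have Gmid : ∀ m, 1 ≤ m → m ≤ p + 1 → G m = y (m - 1) := by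
    intro m h1 h2
    simp only [hG]
    rw [if_neg (by omega), if_neg (by omega)]
  refine ⟨p + 2, F, G, ?_, ?_, F0, Flast, ?_⟩
  · intro k hk
    rcases Nat.eq_zero_or_pos k with rfl | hkpos
    · show F 0 ≠ F 1
      have e1 : F 1 = ι' 0 := (Fmid 1 le_rfl (by omega)).trans (by norm_num)
      rw [F0, e1, h0]
      exact Ne.symm hij
    · by_cases hk2 : k = p + 1
      · subst hk2
        show F (p + 1) ≠ F (p + 2)
        have e1 : F (p + 1) = ι' p := (Fmid (p + 1) (by omega) le_rfl).trans (by
          norm_num)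
        rw [e1, Flast, hp]
        exact hij
      · have e1 : F k = ι' (k - 1) := Fmid k (by omega) (by omega)
        have e2 : F (k + 1) = ι' k := (Fmid (k + 1) (by omega) (by omega)).trans (by
          norm_num)
        rw [e1, e2]
        have hk1 : k - 1 + 1 = k := by omega
        have := halt (k - 1) (by omega)
        rwa [hk1] at this
  · intro k hk
    rcases Nat.eq_zero_or_pos k with rfl | hkpos
    · rw [F0, G0]
      exact ⟨star a, by rw [(hEi j).map_star', ha, star_zero], rfl⟩
    · by_cases hk2 : k = p + 2
      · subst hk2
        rw [Flast, Glast]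
        exact ⟨a, ha, rfl⟩
      · rw [Fmid k (by omega) (by omega), Gmid k (by omega) (by omega)]
        exact hker (k - 1) (by omega)
  · rw [hG]
    exact (wordProd_conj (g j (star a)) (g j a) y p).symm

/-- Key induction: `w* w` decomposes into a `B`-part plus a span of alternating
kernel words with first and last index equal to the last index of `w`. -/
lemma key_decomp
    (hcompat : ∀ i j : Fin 2, (g i).comp (ιB i) = (g j).comp (ιB j))
    (hEi : ∀ i, IsCondExp (ιB i) (Ei i)) :
    ∀ (n : ℕ) (ι : ℕ → Fin 2) (x : ℕ → R),
      (∀ k, k + 1 ≤ n → ι k ≠ ι (k + 1)) →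
      (∀ k ≤ n, ∃ a : A (ι k), Ei (ι k) a = 0 ∧ x k = g (ι k) a) →
      ∃ b : B, star (wordProd x n) * wordProd x n - g 0 (ιB 0 b)
        ∈ Submodule.span ℂ (altSet Ei g (ι n)) := by
  intro n
  induction n with
  | zero =>
    intro ι x _ hker
    obtain ⟨a, ha, hx⟩ := hker 0 le_rfl
    have hw : star (wordProd x 0) * wordProd x 0 = g (ι 0) (star a * a) := by
      show star (x 0) * x 0 = _
      rw [hx, ← map_star, ← map_mul]
    refine ⟨Ei (ι 0) (star a * a), ?_⟩
    rw [hw]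
    exact Submodule.subset_span (letter_decomp ιB g Ei hcompat hEi (ι 0) (star a * a))
  | succ n ih =>
    intro ι x halt hker
    obtain ⟨b', hb'⟩ := ih ι x (fun k hk => halt k (hk.trans (Nat.le_succ n)))
      (fun k hk => hker k (hk.trans (Nat.le_succ n)))
    obtain ⟨a, ha, hx⟩ := hker (n + 1) le_rfl
    have hij : ι n ≠ ι (n + 1) := halt n le_rfl
    set w' := wordProd x n with hw'
    set v := star w' * w' - g 0 (ιB 0 b') with hv
    have hq : star w' * w' = g 0 (ιB 0 b') + v := by rw [hv]; abel
    have hsplit : star (wordProd x (n + 1)) * wordProd x (n + 1)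
        = g (ι (n + 1)) (star a) * (star w' * w') * g (ι (n + 1)) a := by
      rw [wordProd_succ, hx, ← hw']
      rw [star_mul, map_star]
      noncomm_ring
    set c := star a * ιB (ι (n + 1)) b' * a with hc
    have hterm1 : g (ι (n + 1)) (star a) * g 0 (ιB 0 b') * g (ι (n + 1)) a
        = g (ι (n + 1)) c := by
      have hcb : g 0 (ιB 0 b') = g (ι (n + 1)) (ιB (ι (n + 1)) b') := by
        have := DFunLike.congr_fun (hcompat 0 (ι (n + 1))) b'
        simpa using this
      rw [hcb, ← map_mul, ← map_mul]
    refine ⟨Ei (ι (n + 1)) c, ?_⟩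
    have hsum : star (wordProd x (n + 1)) * wordProd x (n + 1)
        = g (ι (n + 1)) c + g (ι (n + 1)) (star a) * v * g (ι (n + 1)) a := by
      rw [hsplit, hq]
      rw [mul_add, add_mul, hterm1]
    rw [hsum]
    have hmem1 : g (ι (n + 1)) c - g 0 (ιB 0 (Ei (ι (n + 1)) c))
        ∈ Submodule.span ℂ (altSet Ei g (ι (n + 1))) :=
      Submodule.subset_span (letter_decomp ιB g Ei hcompat hEi (ι (n + 1)) c)
    have hmem2 : g (ι (n + 1)) (star a) * v * g (ι (n + 1)) a
        ∈ Submodule.span ℂ (altSet Ei g (ι (n + 1))) := by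
      refine span_conj _ _ _ _ ?_ v hb'
      intro r hr
      exact Submodule.subset_span (conj_mem ιB g Ei hEi hij a ha hr)
    have hre : g (ι (n + 1)) c + g (ι (n + 1)) (star a) * v * g (ι (n + 1)) a
          - g 0 (ιB 0 (Ei (ι (n + 1)) c))
        = (g (ι (n + 1)) c - g 0 (ιB 0 (Ei (ι (n + 1)) c)))
          + g (ι (n + 1)) (star a) * v * g (ι (n + 1)) a := by abel
    rw [hre]
    exact Submodule.add_mem _ hmem1 hmem2

end Main

theorem reduced_amalg_EA1_of_word
    {B : Type*} [NonUnitalCStarAlgebra B]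
    {A : Fin 2 → Type*} [∀ i, NonUnitalCStarAlgebra (A i)]
    {R : Type*} [NonUnitalCStarAlgebra R]   -- R = the reduced amalgamated free product
    (ιB : ∀ i, B →⋆ₙₐ[ℂ] A i) (g : ∀ i, A i →⋆ₙₐ[ℂ] R)
    (hg : ∀ i, Isometry (g i)) (hιB : ∀ i, Isometry (ιB i))
    (hcompat : ∀ i j : Fin 2, (g i).comp (ιB i) = (g j).comp (ιB j))
    (Ei : ∀ i, A i →ₗ[ℂ] B) (hEi : ∀ i, IsCondExp (ιB i) (Ei i))
    (E : R →ₗ[ℂ] B) (hE : IsCondExp ((g 0).comp (ιB 0)) E)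
    -- freeness: E vanishes on alternating words of kernel elements
    (hfree : ∀ (m : ℕ) (ι : ℕ → Fin 2) (x : ℕ → R), 1 ≤ m →
      (∀ k, k + 1 < m → ι k ≠ ι (k + 1)) →
      (∀ k < m, ∃ a : A (ι k), Ei (ι k) a = 0 ∧ x k = g (ι k) a) →
      E (wordProd x (m - 1)) = 0)
    -- the canonical conditional expectation E_{A₁} : R → A₁ (= A 0), given by
    -- compression to L²(A₁) in the GNS representation of E
    (EA1 : R →ₗ[ℂ] A 0) (hEA1 : IsCondExp (g 0) EA1)
    (hEA1E : ∀ x : R, Ei 0 (EA1 x) = E x)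
    -- E_{A₁} agrees with E (valued in B ⊆ A₁) on alternating kernel words
    -- not ending in index 1 (= `0 : Fin 2` here)
    (hEA1word : ∀ (m : ℕ) (ι : ℕ → Fin 2) (x : ℕ → R), 1 ≤ m →
      (∀ k, k + 1 < m → ι k ≠ ι (k + 1)) →
      (∀ k < m, ∃ a : A (ι k), Ei (ι k) a = 0 ∧ x k = g (ι k) a) →
      ι (m - 1) ≠ 0 →
      EA1 (wordProd x (m - 1)) = ιB 0 (E (wordProd x (m - 1)))) :
    -- conclusion: E_{A₁}(x* x) = E(x* x) for such words x
    ∀ (m : ℕ) (ι : ℕ → Fin 2) (x : ℕ → R), 1 ≤ m →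
      (∀ k, k + 1 < m → ι k ≠ ι (k + 1)) →
      (∀ k < m, ∃ a : A (ι k), Ei (ι k) a = 0 ∧ x k = g (ι k) a) →
      ι (m - 1) ≠ 0 →
      EA1 (star (wordProd x (m - 1)) * wordProd x (m - 1))
        = ιB 0 (E (star (wordProd x (m - 1)) * wordProd x (m - 1))) := by
  intro m ι x hm halt hker hlast
  obtain ⟨n, rfl⟩ : ∃ n, m = n + 1 := ⟨m - 1, by omega⟩
  simp only [Nat.add_sub_cancel] at hlast ⊢
  -- E kills every element of any altSet
  have hEkill : ∀ (j : Fin 2) (r : R), r ∈ altSet Ei g j → E r = 0 := by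
    rintro j r ⟨p, ι', y, halt', hker', _, _, rfl⟩
    have := hfree (p + 1) ι' y (by omega)
      (fun k hk => halt' k (by omega)) (fun k hk => hker' k (by omega))
    simpa using this
  -- EA1 kills every element of altSet j for j ≠ 0
  have hEA1kill : ∀ (j : Fin 2), j ≠ 0 → ∀ r ∈ altSet Ei g j, EA1 r = 0 := by
    rintro j hj r ⟨p, ι', y, halt', hker', _, hplast, rfl⟩
    have h1 := hEA1word (p + 1) ι' y (by omega)
      (fun k hk => halt' k (by omega)) (fun k hk => hker' k (by omega))
      (by simpa [hplast] using hj)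
    have h2 := hfree (p + 1) ι' y (by omega)
      (fun k hk => halt' k (by omega)) (fun k hk => hker' k (by omega))
    simp only [Nat.add_sub_cancel] at h1 h2
    rw [h1, h2, map_zero]
  obtain ⟨b, hb⟩ := key_decomp ιB g Ei hcompat hEi n ι x
    (fun k hk => halt k (by omega)) (fun k hk => hker k (by omega))
  set w := wordProd x n
  set v := star w * w - g 0 (ιB 0 b) with hv
  have hsum : star w * w = g 0 (ιB 0 b) + v := by rw [hv]; abel
  have hEv : E v = 0 := span_kill E _ (hEkill (ι n)) v hb
  have hEA1v : EA1 v = 0 := span_kill EA1 _ (hEA1kill (ι n) hlast) v hb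
  have hEb : E (g 0 (ιB 0 b)) = b := by
    have := hE.projection b
    simpa using this
  have hEA1b : EA1 (g 0 (ιB 0 b)) = ιB 0 b := hEA1.projection (ιB 0 b)
  rw [hsum, map_add, map_add, hEv, hEA1v, add_zero, add_zero, hEb, hEA1b]
end
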